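/- arXiv:1011.0524 — 2 statements merged into one kernel-verified Lean document; each statement's English description precedes it below -/
import Mathlib

section
/- Dobinski's formula: for every natural number n, B(n) = (1/e) \sum_{k=0}^\infty k^n / k!. -/
/-- The Bell number `B(n)`: the number of partitions of an `n`-element set. -/
noncomputable def bell (n : ℕ) : ℕ := Nat.card (Finpartition (Finset.univ : Finset (Fin n)))

set_option linter.unusedSectionVars false

open Finset

variable {α β : Type*} [DecidableEq α] [DecidableEq β]

lemma map_preimage_of_subset (f : α ↪ β) {s : Finset α} {t : Finset β} (h : t ⊆ s.map f) :
    (t.preimage f f.injective.injOn).map f = t := by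
  ext b
  simp only [mem_map, mem_preimage]
  constructor
  · rintro ⟨a, ha, rfl⟩; exact ha
  · intro hb
    obtain ⟨a, -, rfl⟩ := mem_map.1 (h hb)
    exact ⟨a, hb, rfl⟩

/-- Transport a finpartition along an embedding. -/
noncomputable def Finpartition.mapEmbEquiv (f : α ↪ β) (s : Finset α) :
    Finpartition s ≃ Finpartition (s.map f) where
  toFun P :=
    { parts := P.parts.image (Finset.map f)
      supIndep := by
        rw [Finset.supIndep_iff_pairwiseDisjoint]
        rintro _ h1 _ h2 hne
        simp only [coe_image, Set.mem_image, mem_coe] at h1 h2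
        obtain ⟨p, hp, rfl⟩ := h1
        obtain ⟨q, hq, rfl⟩ := h2
        have hpq : p ≠ q := by rintro rfl; exact hne rfl
        exact (Finset.disjoint_map f).2 (P.disjoint hp hq hpq)
      sup_parts := by
        ext b
        simp only [mem_sup, mem_image, mem_map, id]
        constructor
        · rintro ⟨_, ⟨p, hp, rfl⟩, hb⟩
          rw [mem_map] at hb
          obtain ⟨a, ha, rfl⟩ := hb
          exact ⟨a, by rw [← P.sup_parts]; exact mem_sup.2 ⟨p, hp, ha⟩, rfl⟩
        · rintro ⟨a, ha, rfl⟩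
          rw [← P.sup_parts] at ha
          obtain ⟨p, hp, hap⟩ := mem_sup.1 ha
          exact ⟨p.map f, ⟨p, hp, rfl⟩, mem_map_of_mem f hap⟩
      bot_notMem := by
        simp only [bot_eq_empty, mem_image]
        rintro ⟨p, hp, h⟩
        rw [Finset.map_eq_empty] at h
        rw [h] at hp
        exact P.bot_notMem hp }
  invFun Q :=
    { parts := Q.parts.image (fun t => t.preimage f f.injective.injOn)
      supIndep := by
        rw [Finset.supIndep_iff_pairwiseDisjoint]
        rintro _ h1 _ h2 hne
        simp only [coe_image, Set.mem_image, mem_coe] at h1 h2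
        obtain ⟨p, hp, rfl⟩ := h1
        obtain ⟨q, hq, rfl⟩ := h2
        have hpq : p ≠ q := by rintro rfl; exact hne rfl
        have := Q.disjoint hp hq hpq
        simp only [Function.onFun, id] at this ⊢
        rw [Finset.disjoint_left] at this ⊢
        intro a ha ha'
        rw [mem_preimage] at ha ha'
        exact this ha ha'
      sup_parts := by
        ext a
        simp only [mem_sup, mem_image, id]
        constructor
        · rintro ⟨_, ⟨p, hp, rfl⟩, hb⟩
          rw [mem_preimage] at hb
          have : f a ∈ s.map f := by
            rw [← Q.sup_parts]; exact mem_sup.2 ⟨p, hp, hb⟩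
          exact (mem_map' f).1 this
        · intro ha
          have : f a ∈ s.map f := (mem_map' f).2 ha
          rw [← Q.sup_parts] at this
          obtain ⟨p, hp, hap⟩ := mem_sup.1 this
          exact ⟨_, ⟨p, hp, rfl⟩, mem_preimage.2 hap⟩
      bot_notMem := by
        simp only [bot_eq_empty, mem_image]
        rintro ⟨p, hp, h⟩
        obtain ⟨b, hb⟩ := Q.nonempty_of_mem_parts hp
        obtain ⟨a, -, rfl⟩ := mem_map.1 (Q.le hp hb)
        have : a ∈ p.preimage f f.injective.injOn := mem_preimage.2 hb
        rw [h] at this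
        exact notMem_empty a this }
  left_inv P := by
    apply Finpartition.ext
    simp only [Finset.image_image]
    rw [← Finset.image_id (s := P.parts)]
    rw [Finset.image_image]
    apply Finset.image_congr
    intro p hp
    simp only [Function.comp_apply, id]
    ext a
    simp [mem_preimage]
  right_inv Q := by
    apply Finpartition.ext
    simp only [Finset.image_image]
    rw [← Finset.image_id (s := Q.parts)]
    rw [Finset.image_image]
    apply Finset.image_congr
    intro p hp
    simp only [Function.comp_apply, id]
    exact map_preimage_of_subset f (Q.le hp)

lemma card_finpartition_map (f : α ↪ β) (s : Finset α) :
    Nat.card (Finpartition (s.map f)) = Nat.card (Finpartition s) :=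
  Nat.card_congr (Finpartition.mapEmbEquiv f s).symm

lemma card_finpartition_eq_bell (s : Finset α) :
    Nat.card (Finpartition s) = bell s.card := by
  have h1 : s = (Finset.univ : Finset {x // x ∈ s}).map (Function.Embedding.subtype _) := by
    rw [univ_eq_attach, attach_map_val]
  have h2 : (Finset.univ : Finset {x // x ∈ s}).map s.equivFin.toEmbedding
      = (Finset.univ : Finset (Fin s.card)) := by
    exact Finset.map_univ_equiv _
  conv_lhs => rw [h1]
  rw [card_finpartition_map, ← card_finpartition_map s.equivFin.toEmbedding Finset.univ, h2, bell]

lemma card_finpartition_insert (a : α) (s : Finset α) (ha : a ∉ s) :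
    Nat.card (Finpartition (insert a s)) = ∑ T ∈ s.powerset, Nat.card (Finpartition (s \ T)) := by
  classical
  simp only [Nat.card_eq_fintype_card, ← Finset.card_univ]
  rw [Finset.card_eq_sum_card_fiberwise
    (f := fun P : Finpartition (insert a s) => (P.part a).erase a) (t := s.powerset)]
  · apply Finset.sum_congr rfl
    intro T hT
    rw [mem_powerset] at hT
    have haT : a ∉ T := fun h => ha (hT h)
    have hb : (insert a T : Finset α) ≠ ⊥ := by
      simp [Finset.insert_ne_empty]
    have hab : Disjoint (s \ T) (insert a T) := by
      rw [Finset.disjoint_left]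
      intro x hx hx'
      rw [Finset.mem_sdiff] at hx
      rcases Finset.mem_insert.1 hx' with rfl | h
      · exact ha hx.1
      · exact hx.2 h
    have hc : (s \ T) ⊔ (insert a T) = insert a s := by
      ext x
      simp only [sup_eq_union, Finset.mem_union, Finset.mem_sdiff, Finset.mem_insert]
      constructor
      · rintro (⟨h1, -⟩ | h | h)
        · exact Or.inr h1
        · exact Or.inl h
        · exact Or.inr (hT h)
      · rintro (rfl | h)
        · exact Or.inr (Or.inl rfl)
        · by_cases hxT : x ∈ T
          · exact Or.inr (Or.inr hxT)
          · exact Or.inl ⟨h, hxT⟩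
    have hd : (insert a s) \ (insert a T) = s \ T := by
      ext x
      simp only [Finset.mem_sdiff, Finset.mem_insert, not_or]
      constructor
      · rintro ⟨rfl | h1, h2, h3⟩
        · exact absurd rfl h2
        · exact ⟨h1, h3⟩
      · rintro ⟨h1, h3⟩
        exact ⟨Or.inr h1, fun e => ha (e ▸ h1), h3⟩
    refine Finset.card_bij'
      (i := fun P hP => ((P.avoid (insert a T)).copy hd))
      (j := fun Q _ => Q.extend hb hab hc)
      (fun _ _ => Finset.mem_univ _) ?_ ?_ ?_
    · -- extend lands in the fiber
      intro Q _
      rw [Finset.mem_filter]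
      refine ⟨Finset.mem_univ _, ?_⟩
      have hmem : (insert a T : Finset α) ∈ (Q.extend hb hab hc).parts := by
        simp [Finpartition.extend]
      have : (Q.extend hb hab hc).part a = insert a T :=
        Finpartition.part_eq_of_mem _ hmem (Finset.mem_insert_self a T)
      rw [this, Finset.erase_insert haT]
    · -- left inverse : extend (avoid P) = P
      intro P hP
      rw [Finset.mem_filter] at hP
      have haP : a ∈ insert a s := Finset.mem_insert_self a s
      have hparta : P.part a = insert a T := by
        have h1 := hP.2
        have h2 : a ∈ P.part a := P.mem_part haP
        rw [← h1, Finset.insert_erase h2]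
      apply Finpartition.ext
      ext t
      simp only [Finpartition.extend, Finset.mem_insert, Finpartition.copy_parts,
        Finpartition.mem_avoid]
      constructor
      · rintro (rfl | ⟨d, hd', hd2, rfl⟩)
        · rw [← hparta]; exact P.part_mem.2 haP
        · have hdb : d ≠ insert a T := fun e => hd2 (e ▸ le_refl _)
          have hdisj : Disjoint d (insert a T) := by
            rw [← hparta]
            exact P.disjoint hd' (P.part_mem.2 haP) (fun e => hdb (by rw [← hparta]; exact e))
          rwa [Finset.sdiff_eq_self_of_disjoint hdisj]
      · intro ht
        by_cases h : t = insert a T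
        · exact Or.inl h
        · refine Or.inr ⟨t, ht, ?_, ?_⟩
          · intro hle
            have hdisj : Disjoint t (insert a T) := by
              rw [← hparta]
              exact P.disjoint ht (P.part_mem.2 haP) (fun e => h (by rw [← hparta]; exact e))
            have : t = ∅ := Finset.eq_empty_of_forall_notMem fun x hx =>
              (Finset.disjoint_left.1 hdisj hx) (hle hx)
            exact P.bot_notMem (by rwa [this] at ht)
          · apply Finset.sdiff_eq_self_of_disjoint
            rw [← hparta]
            exact P.disjoint ht (P.part_mem.2 haP) (fun e => h (by rw [← hparta]; exact e))
    · -- right inverse : avoid (extend Q) = Q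
      intro Q _
      apply Finpartition.ext
      ext t
      simp only [Finpartition.copy_parts, Finpartition.mem_avoid, Finpartition.extend,
        Finset.mem_insert]
      constructor
      · rintro ⟨d, (rfl | hd), hd2, rfl⟩
        · exact absurd le_rfl hd2
        · have hdisj : Disjoint d (insert a T) := (hab.mono_left (Q.le hd)).symm.symm
          have : Disjoint d (insert a T) := hab.mono_left (Q.le hd)
          rwa [Finset.sdiff_eq_self_of_disjoint this]
      · intro ht
        have hdisj : Disjoint t (insert a T) := hab.mono_left (Q.le ht)
        refine ⟨t, Or.inr ht, ?_, Finset.sdiff_eq_self_of_disjoint hdisj⟩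
        intro hle
        obtain ⟨x, hx⟩ := Q.nonempty_of_mem_parts ht
        exact (Finset.disjoint_left.1 hdisj hx) (hle hx)
  · intro P _
    rw [Finset.mem_coe, Finset.mem_powerset]
    intro x hx
    rw [Finset.mem_erase] at hx
    have := P.le (P.part_mem.2 (Finset.mem_insert_self a s)) hx.2
    rcases Finset.mem_insert.1 this with rfl | h
    · exact absurd rfl hx.1
    · exact h

lemma bell_succ (n : ℕ) :
    bell (n + 1) = ∑ i ∈ Finset.range (n + 1), n.choose i * bell i := by
  classical
  have key := card_finpartition_insert (0 : Fin (n+1)) ({0}ᶜ : Finset (Fin (n+1)))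
    (by simp)
  have hins : insert (0 : Fin (n+1)) ({0}ᶜ : Finset (Fin (n+1))) = Finset.univ := by
    ext x; by_cases h : x = 0 <;> simp [h]
  have hcard : ({0}ᶜ : Finset (Fin (n+1))).card = n := by
    rw [Finset.card_compl]; simp
  rw [hins] at key
  rw [bell, key]
  rw [Finset.sum_powerset]
  rw [hcard]
  have : ∀ i ∈ Finset.range (n+1), ∑ T ∈ Finset.powersetCard i ({0}ᶜ : Finset (Fin (n+1))),
      Nat.card (Finpartition (({0}ᶜ : Finset (Fin (n+1))) \ T)) = n.choose i * bell (n - i) := by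
    intro i hi
    rw [Finset.mem_range] at hi
    rw [Finset.sum_congr rfl (fun T hT => ?_), Finset.sum_const, smul_eq_mul,
      Finset.card_powersetCard, hcard]
    rw [Finset.mem_powersetCard] at hT
    rw [card_finpartition_eq_bell, Finset.card_sdiff_of_subset hT.1, hcard, hT.2]
  rw [Finset.sum_congr rfl this]
  rw [← Finset.sum_range_reflect]
  apply Finset.sum_congr rfl
  intro j hj
  rw [Finset.mem_range] at hj
  have hjn : j ≤ n := Nat.lt_succ_iff.1 hj
  have h1 : n + 1 - 1 - j = n - j := by omega
  rw [h1, Nat.choose_symm hjn, Nat.sub_sub_self hjn]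

lemma pow_succ_div_fact_eq (n k : ℕ) :
    ((k + 1 : ℕ) : ℝ) ^ (n + 1) / ((k + 1).factorial : ℝ)
      = ∑ i ∈ range (n + 1), (n.choose i : ℝ) * ((k : ℝ) ^ i / k.factorial) := by
  have hk : ((k + 1).factorial : ℝ) = ((k : ℝ) + 1) * k.factorial := by
    rw [Nat.factorial_succ]; push_cast; ring
  have h2 : ((k : ℝ) + 1) ^ n = ∑ i ∈ range (n + 1), (k : ℝ) ^ i * (n.choose i : ℝ) := by
    simpa using add_pow (k : ℝ) 1 n
  have hfac : (k.factorial : ℝ) ≠ 0 := Nat.cast_ne_zero.2 k.factorial_ne_zero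
  have hk1 : ((k : ℝ) + 1) ≠ 0 := by positivity
  push_cast
  rw [pow_succ, hk]
  rw [show ((k:ℝ)+1)^n * ((k:ℝ)+1) / (((k:ℝ)+1) * k.factorial) = ((k:ℝ)+1)^n / k.factorial by
    field_simp]
  rw [h2, Finset.sum_div]
  exact Finset.sum_congr rfl fun i _ => by ring

lemma summable_pow_div_fact (n : ℕ) :
    Summable (fun k : ℕ => (k : ℝ) ^ n / (k.factorial : ℝ)) := by
  induction n using Nat.strong_induction_on with
  | _ n ih =>
    match n with
    | 0 =>
      refine (Real.summable_pow_div_factorial 1).congr fun k => ?_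
      simp
    | n + 1 =>
      rw [← summable_nat_add_iff 1]
      refine Summable.congr ?_ (fun k => (pow_succ_div_fact_eq n k).symm)
      exact summable_sum fun i hi =>
        ((ih i (by simpa using Nat.lt_succ_of_le (Nat.lt_succ_iff.1 (mem_range.1 hi)))).mul_left _)

noncomputable def dobS (n : ℕ) : ℝ := ∑' k : ℕ, (k : ℝ) ^ n / (k.factorial : ℝ)

lemma dobS_zero : dobS 0 = Real.exp 1 := by
  rw [dobS, Real.exp_eq_exp_ℝ, NormedSpace.exp_eq_tsum ℝ]
  simp [one_div]

lemma dobS_succ (n : ℕ) :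
    dobS (n + 1) = ∑ i ∈ range (n + 1), (n.choose i : ℝ) * dobS i := by
  rw [dobS, (summable_pow_div_fact (n + 1)).tsum_eq_zero_add]
  have h0 : ((0 : ℕ) : ℝ) ^ (n + 1) / ((Nat.factorial 0 : ℕ) : ℝ) = 0 := by
    simp
  rw [show ∀ x : ℝ, ((0 : ℕ) : ℝ) ^ (n + 1) / ((Nat.factorial 0 : ℕ) : ℝ) + x = x from
    fun x => by rw [h0, zero_add]]
  calc ∑' k : ℕ, ((k + 1 : ℕ) : ℝ) ^ (n + 1) / ((k + 1).factorial : ℝ)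
      = ∑' k : ℕ, ∑ i ∈ range (n + 1), (n.choose i : ℝ) * ((k : ℝ) ^ i / k.factorial) := by
        exact tsum_congr fun k => pow_succ_div_fact_eq n k
    _ = ∑ i ∈ range (n + 1), ∑' k : ℕ, (n.choose i : ℝ) * ((k : ℝ) ^ i / k.factorial) :=
        Summable.tsum_finsetSum fun i _ => (summable_pow_div_fact i).mul_left _
    _ = ∑ i ∈ range (n + 1), (n.choose i : ℝ) * dobS i := by
        exact Finset.sum_congr rfl fun i _ => by rw [tsum_mul_left]; rfl


lemma bell_zero : bell 0 = 1 := by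
  rw [bell]
  have h : (Finset.univ : Finset (Fin 0)) = (⊥ : Finset (Fin 0)) := by simp
  rw [h]
  exact Nat.card_unique

lemma bell_mul_exp (n : ℕ) : (bell n : ℝ) * Real.exp 1 = dobS n := by
  induction n using Nat.strong_induction_on with
  | _ n ih =>
    match n with
    | 0 => simp [bell_zero, dobS_zero]
    | n + 1 =>
      rw [bell_succ, dobS_succ]
      push_cast
      rw [Finset.sum_mul]
      refine Finset.sum_congr rfl fun i hi => ?_
      rw [mul_assoc, ih i (by simpa using Nat.lt_succ_of_le (Nat.lt_succ_iff.1 (mem_range.1 hi)))]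

/-- Dobinski's formula: B(n) = (1/e) ∑_{k=0}^∞ kⁿ/k!. -/
theorem dobinski (n : ℕ) :
    (bell n : ℝ) = (1 / Real.exp 1) * ∑' k : ℕ, (k : ℝ) ^ n / (k.factorial : ℝ) := by
  have h := bell_mul_exp n
  have he : Real.exp 1 ≠ 0 := Real.exp_ne_zero 1
  rw [dobS] at h
  field_simp
  linarith [h]
end

section
/- Dobinski's formula for Bell polynomials: for every natural number n and real y, B_n(y) = e^{-y} \sum_{k=0}^\infty (k^n/k!) y^k. -/
/-- The Stirling number of the second kind `S(n,k)`: the number of partitions of an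
`n`-element set into exactly `k` nonempty blocks. -/
noncomputable def stirling (n k : ℕ) : ℕ :=
  Nat.card {P : Finpartition (Finset.univ : Finset (Fin n)) // P.parts.card = k}

/-- The Bell polynomial `B_n(y) = ∑_{k=0}^n S(n,k) yᵏ`. -/
noncomputable def bellPoly (n : ℕ) (y : ℝ) : ℝ :=
  ∑ k ∈ Finset.range (n + 1), (stirling n k : ℝ) * y ^ k

open Finset

instance kerDec {n k : ℕ} (f : Fin n → Fin k) : DecidableRel (Setoid.ker f).r :=
  fun a b => decidable_of_iff (f a = f b) Iff.rfl

lemma Finpartition.eq_of_part_eq {α : Type*} [DecidableEq α] {s : Finset α}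
    {P Q : Finpartition s} (h : ∀ a ∈ s, P.part a = Q.part a) : P = Q := by
  ext t
  constructor <;> intro ht
  · obtain ⟨a, ha, rfl⟩ := P.part_surjOn ht
    rw [h a ha]; exact Q.part_mem.mpr ha
  · obtain ⟨a, ha, rfl⟩ := Q.part_surjOn ht
    rw [← h a ha]; exact P.part_mem.mpr ha

noncomputable def fiberEquiv (n k : ℕ) (P : Finpartition (Finset.univ : Finset (Fin n))) :
    {f : Fin n → Fin k // Finpartition.ofSetoid (Setoid.ker f) = P} ≃
      ({p : Finset (Fin n) // p ∈ P.parts} ↪ Fin k) where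
  toFun := fun ⟨f, hf⟩ =>
    ⟨fun p => f ((p : Finset (Fin n)).min' (P.nonempty_of_mem_parts p.2)), by
      subst hf
      rintro ⟨p, hp⟩ ⟨q, hq⟩ h
      simp only at h
      have hpm := p.min'_mem ((Finpartition.ofSetoid (Setoid.ker f)).nonempty_of_mem_parts hp)
      have hqm := q.min'_mem ((Finpartition.ofSetoid (Setoid.ker f)).nonempty_of_mem_parts hq)
      have h1 : q.min' ((Finpartition.ofSetoid (Setoid.ker f)).nonempty_of_mem_parts hq) ∈
          (Finpartition.ofSetoid (Setoid.ker f)).part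
            (p.min' ((Finpartition.ofSetoid (Setoid.ker f)).nonempty_of_mem_parts hp)) :=
        Finpartition.mem_part_ofSetoid_iff_rel.mpr h
      have h2 : p = (Finpartition.ofSetoid (Setoid.ker f)).part
          (p.min' ((Finpartition.ofSetoid (Setoid.ker f)).nonempty_of_mem_parts hp)) :=
        ((Finpartition.ofSetoid (Setoid.ker f)).part_eq_of_mem hp hpm).symm
      have h3 : q = (Finpartition.ofSetoid (Setoid.ker f)).part
          (p.min' ((Finpartition.ofSetoid (Setoid.ker f)).nonempty_of_mem_parts hp)) :=
        (Finpartition.ofSetoid (Setoid.ker f)).eq_of_mem_parts hq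
          ((Finpartition.ofSetoid (Setoid.ker f)).part_mem.mpr (mem_univ _)) hqm h1
      exact Subtype.ext (h2.trans h3.symm)⟩
  invFun := fun g =>
    ⟨fun x => g ⟨P.part x, P.part_mem.mpr (mem_univ x)⟩, by
      apply Finpartition.eq_of_part_eq
      intro a _
      ext b
      rw [Finpartition.mem_part_ofSetoid_iff_rel]
      have hiff : (Setoid.ker fun x => g ⟨P.part x, P.part_mem.mpr (mem_univ x)⟩).r a b ↔
          P.part a = P.part b := by
        constructor
        · intro h
          exact Subtype.ext_iff.mp (g.injective h)
        · intro h
          show g _ = g _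
          congr 1
          exact Subtype.ext h
      rw [hiff, P.mem_part_iff_part_eq_part (mem_univ b) (mem_univ a)]
      exact eq_comm⟩
  left_inv := fun ⟨f, hf⟩ => by
    subst hf
    apply Subtype.ext
    funext x
    set Q := Finpartition.ofSetoid (Setoid.ker f) with hQ
    show f ((Q.part x).min' _) = f x
    have hm : (Q.part x).min' (Q.nonempty_of_mem_parts (Q.part_mem.mpr (mem_univ x))) ∈ Q.part x :=
      Finset.min'_mem _ _
    have := (Finpartition.mem_part_ofSetoid_iff_rel (s := Setoid.ker f) (a := x)).mp hm
    exact this.symm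
  right_inv := fun g => by
    apply Function.Embedding.ext
    intro p
    show g ⟨P.part ((p : Finset (Fin n)).min' (P.nonempty_of_mem_parts p.2)), _⟩ = g p
    congr 1
    exact Subtype.ext (P.part_eq_of_mem p.2 (Finset.min'_mem _ _))

lemma card_fiber (n k : ℕ) (P : Finpartition (Finset.univ : Finset (Fin n))) :
    Fintype.card {f : Fin n → Fin k // Finpartition.ofSetoid (Setoid.ker f) = P} =
      k.descFactorial P.parts.card := by
  classical
  rw [Fintype.card_congr (fiberEquiv n k P), Fintype.card_embedding_eq, Fintype.card_coe,
    Fintype.card_fin]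

lemma pow_eq_sum_stirling (n k : ℕ) :
    k ^ n = ∑ j ∈ Finset.range (n + 1), stirling n j * k.descFactorial j := by
  classical
  have h0 : k ^ n = Fintype.card (Fin n → Fin k) := by simp
  have h1 : (Finset.univ : Finset (Fin n → Fin k)).card =
      ∑ P ∈ (Finset.univ : Finset (Finpartition (Finset.univ : Finset (Fin n)))),
        (Finset.univ.filter fun f : Fin n → Fin k =>
          Finpartition.ofSetoid (Setoid.ker f) = P).card :=
    Finset.card_eq_sum_card_fiberwise (fun f _ => mem_univ _)
  have h2 : ∀ P : Finpartition (Finset.univ : Finset (Fin n)),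
      (Finset.univ.filter fun f : Fin n → Fin k =>
        Finpartition.ofSetoid (Setoid.ker f) = P).card = k.descFactorial P.parts.card := by
    intro P
    rw [← Fintype.card_subtype, card_fiber]
  have h3 : ∀ P : Finpartition (Finset.univ : Finset (Fin n)),
      P.parts.card ∈ Finset.range (n + 1) := by
    intro P
    rw [Finset.mem_range, Nat.lt_succ_iff]
    simpa using P.card_parts_le_card
  calc k ^ n = ∑ P : Finpartition (Finset.univ : Finset (Fin n)),
        k.descFactorial P.parts.card := by
        rw [h0, ← Finset.card_univ, h1]
        exact Finset.sum_congr rfl fun P _ => h2 P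
    _ = ∑ j ∈ Finset.range (n + 1),
          ∑ P ∈ Finset.univ.filter
            (fun P : Finpartition (Finset.univ : Finset (Fin n)) => P.parts.card = j),
            k.descFactorial P.parts.card :=
        (Finset.sum_fiberwise_of_maps_to (fun P _ => h3 P) _).symm
    _ = ∑ j ∈ Finset.range (n + 1), stirling n j * k.descFactorial j := by
        refine Finset.sum_congr rfl fun j _ => ?_
        rw [Finset.sum_congr rfl (fun P hP => by
          rw [(Finset.mem_filter.mp hP).2]), Finset.sum_const, smul_eq_mul]
        congr 1
        rw [stirling, Nat.card_eq_fintype_card, Fintype.card_subtype]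

lemma summable_and_tsum_descFactorial (j : ℕ) (y : ℝ) :
    Summable (fun k : ℕ => (Nat.descFactorial k j : ℝ) / (Nat.factorial k : ℝ) * y ^ k) ∧
      ∑' k : ℕ, (Nat.descFactorial k j : ℝ) / (Nat.factorial k : ℝ) * y ^ k =
        y ^ j * Real.exp y := by
  set F : ℕ → ℝ := fun k => (Nat.descFactorial k j : ℝ) / (Nat.factorial k : ℝ) * y ^ k with hF
  have hcomp : ∀ m : ℕ, F (m + j) = y ^ j * (y ^ m / (Nat.factorial m : ℝ)) := by
    intro m
    have hfac : (Nat.factorial m : ℝ) * ((m + j).descFactorial j : ℝ) =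
        ((m + j).factorial : ℝ) := by
      rw [← Nat.cast_mul]
      norm_cast
      have := Nat.factorial_mul_descFactorial (n := m + j) (k := j) (Nat.le_add_left j m)
      simpa using this
    have hm : (Nat.factorial m : ℝ) ≠ 0 := Nat.cast_ne_zero.mpr (Nat.factorial_ne_zero m)
    have hmj : ((m + j).factorial : ℝ) ≠ 0 := Nat.cast_ne_zero.mpr (Nat.factorial_ne_zero _)
    rw [hF]
    simp only
    rw [pow_add]
    field_simp
    linear_combination (y ^ m * y ^ j) * hfac
  have hsupp : ∀ x ∉ Set.range (fun m : ℕ => m + j), F x = 0 := by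
    intro x hx
    have hxj : x < j := by
      by_contra h
      push_neg at h
      exact hx ⟨x - j, show x - j + j = x by omega⟩
    rw [hF]
    simp [Nat.descFactorial_eq_zero_iff_lt.mpr hxj]
  have hinj : Function.Injective (fun m : ℕ => m + j) := fun a b h => by simpa using h
  have hsumcomp : Summable (F ∘ fun m : ℕ => m + j) := by
    have := (Real.summable_pow_div_factorial y).mul_left (y ^ j)
    apply this.congr
    intro m
    exact (hcomp m).symm
  have hsum : Summable F := (hinj.summable_iff hsupp).mp hsumcomp
  refine ⟨hsum, ?_⟩
  have := hinj.tsum_eq (f := F) (by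
    intro x hx
    by_contra h
    exact hx (hsupp x h))
  rw [← this]
  calc ∑' m : ℕ, F (m + j) = ∑' m : ℕ, y ^ j * (y ^ m / (Nat.factorial m : ℝ)) := by
        exact tsum_congr hcomp
    _ = y ^ j * ∑' m : ℕ, y ^ m / (Nat.factorial m : ℝ) := tsum_mul_left
    _ = y ^ j * Real.exp y := by
        congr 1
        rw [Real.exp_eq_exp_ℝ, NormedSpace.exp_eq_tsum_div]

/-- Dobinski for Bell polynomials: B_n(y) = e^{-y} ∑_{k=0}^∞ (kⁿ/k!) yᵏ. -/
theorem dobinski_poly (n : ℕ) (y : ℝ) :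
    bellPoly n y = Real.exp (-y) * ∑' k : ℕ, (k : ℝ) ^ n / (k.factorial : ℝ) * y ^ k := by
  have key : ∀ k : ℕ, (k : ℝ) ^ n / (k.factorial : ℝ) * y ^ k =
      ∑ j ∈ Finset.range (n + 1), (stirling n j : ℝ) *
        ((Nat.descFactorial k j : ℝ) / (Nat.factorial k : ℝ) * y ^ k) := by
    intro k
    have := pow_eq_sum_stirling n k
    have hc : ((k : ℝ)) ^ n = ∑ j ∈ Finset.range (n + 1),
        (stirling n j : ℝ) * (Nat.descFactorial k j : ℝ) := by
      rw [← Nat.cast_pow, this]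
      push_cast
      ring
    rw [hc, Finset.sum_div, Finset.sum_mul]
    refine Finset.sum_congr rfl fun j _ => ?_
    ring
  have htsum : ∑' k : ℕ, (k : ℝ) ^ n / (k.factorial : ℝ) * y ^ k =
      ∑ j ∈ Finset.range (n + 1), (stirling n j : ℝ) * (y ^ j * Real.exp y) := by
    rw [tsum_congr key]
    rw [Summable.tsum_finsetSum (fun j _ => ((summable_and_tsum_descFactorial j y).1.mul_left _))]
    refine Finset.sum_congr rfl fun j _ => ?_
    rw [tsum_mul_left, (summable_and_tsum_descFactorial j y).2]
  rw [htsum]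
  have : ∑ j ∈ Finset.range (n + 1), (stirling n j : ℝ) * (y ^ j * Real.exp y) =
      Real.exp y * bellPoly n y := by
    rw [bellPoly, Finset.mul_sum]
    refine Finset.sum_congr rfl fun j _ => ?_
    ring
  rw [this, ← mul_assoc, ← Real.exp_add, neg_add_cancel, Real.exp_zero, one_mul]
end
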